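/- Completeness of ℜ_d for the universal interpretation of nondeterministic functions: for every formula φ of 𝓛, ⊢_{ℜ_d} φ if and only if φ is a tautology of the standard enumeration ζ of nondeterministic partial recursive functions under the universal semantics, i.e. φ^† = ℕ for every valuation †. -/

import Mathlib

/-- Formulas of the modal language 𝓛: propositional variables, ⊥, →, and ▷. -/
inductive Formula : Type
  | var : ℕ → Formula
  | bot : Formula
  | imp : Formula → Formula → Formula
  | tri : Formula → Formula → Formula
deriving DecidableEq

namespace Formula

/-- ¬φ := φ → ⊥ -/
def neg (φ : Formula) : Formula := imp φ bot
/-- ⊤ := ¬⊥ -/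
def top : Formula := neg bot
/-- φ ∨ ψ := ¬φ → ψ -/
def disj (φ ψ : Formula) : Formula := imp (neg φ) ψ
/-- φ ∧ ψ := ¬(φ → ¬ψ) -/
def conj (φ ψ : Formula) : Formula := neg (imp φ (neg ψ))

/-- `φ` is a substitution instance of a classical propositional tautology:
it evaluates to `true` under every boolean valuation of formulas that
respects `⊥` and `→` (variables and `▷`-formulas are treated as atoms). -/
def IsPropTaut (φ : Formula) : Prop :=
  ∀ v : Formula → Bool, v bot = false →
    (∀ a b, v (imp a b) = (!(v a) || v b)) → v φ = true

/-- Hilbert-style provability.  `Prv false` is the logic ℜ (axioms: classical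
tautologies, A1, A2, A3; rules: Modus Ponens and monotonicity M);
`Prv true` is the logic ℜ_d, which additionally has axiom A4. -/
inductive Prv : Bool → Formula → Prop
  | taut {d : Bool} {φ} : IsPropTaut φ → Prv d φ
  | a1 {d : Bool} (φ ψ χ) : Prv d (imp (tri φ ψ) (imp (tri χ ψ) (tri (disj φ χ) ψ)))
  | a2 {d : Bool} (φ) : Prv d (tri bot φ)
  | a3 {d : Bool} (φ) : Prv d (tri φ top)
  | a4 (φ ψ χ) : Prv true (imp (tri φ ψ) (imp (tri φ χ) (tri φ (conj ψ χ))))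
  | mp {d : Bool} {φ ψ} : Prv d (imp φ ψ) → Prv d φ → Prv d ψ
  | mono {d : Bool} {φ₁ φ₂ ψ₁ ψ₂} : Prv d (imp φ₁ φ₂) → Prv d (imp ψ₁ ψ₂) →
      Prv d (imp (tri φ₂ ψ₁) (tri φ₁ ψ₂))

/-- `Deriv d Δ φ`: φ is derivable from the hypotheses Δ together with all
theorems of the logic (`Prv d`) using only Modus Ponens. -/
inductive Deriv (d : Bool) (Δ : Set Formula) : Formula → Prop
  | hyp {φ} : φ ∈ Δ → Deriv d Δ φ
  | thm {φ} : Prv d φ → Deriv d Δ φ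
  | mp {φ ψ} : Deriv d Δ (imp φ ψ) → Deriv d Δ φ → Deriv d Δ ψ

/-- Conjunction of a list of formulas (empty conjunction is ⊤). -/
def conjList : List Formula → Formula
  | [] => top
  | φ :: l => conj φ (conjList l)

/-- ⋀Γ : conjunction of all formulas of a finite set Γ (⋀∅ = ⊤). -/
noncomputable def bigConj (Γ : Finset Formula) : Formula := conjList Γ.toList

/-- A set of formulas is consistent if ⊥ is not derivable from it. -/
def Consistent (d : Bool) (Δ : Set Formula) : Prop := ¬ Deriv d Δ bot

/-- The pair (u,v) is w-consistent: w ⊬ ⋀u ▷ ¬⋀v. -/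
def WCons (d : Bool) (w : Set Formula) (u v : Finset Formula) : Prop :=
  ¬ Deriv d w (tri (bigConj u) (neg (bigConj v)))

/-- The operation ∼: ∼(¬φ) = φ, and ∼φ = ¬φ if φ is not a negation. -/
def simNeg : Formula → Formula
  | imp φ bot => φ
  | φ => neg φ

/-- Φ is closed under subformulas. -/
def SubClosed (Φ : Finset Formula) : Prop :=
  (∀ a b, imp a b ∈ Φ → a ∈ Φ ∧ b ∈ Φ) ∧ (∀ a b, tri a b ∈ Φ → a ∈ Φ ∧ b ∈ Φ)

/-- Φ is closed under the operation ∼. -/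
def SimClosed (Φ : Finset Formula) : Prop := ∀ φ ∈ Φ, simNeg φ ∈ Φ

/-- w is a maximal consistent subset of Φ: w ⊆ Φ, w is consistent, and for
every φ ∈ Φ either φ ∈ w or ∼φ ∈ w. -/
def MaxCons (d : Bool) (Φ : Finset Formula) (w : Finset Formula) : Prop :=
  w ⊆ Φ ∧ Consistent d ↑w ∧ ∀ φ ∈ Φ, φ ∈ w ∨ simNeg φ ∈ w

/-- Kripke forcing: `rel w u v` means u →_w v, `val w p` means w ⊩ p. -/
def Forces {W : Type*} (rel : W → W → W → Prop) (val : W → ℕ → Prop) :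
    W → Formula → Prop
  | w, var p => val w p
  | _, bot => False
  | w, imp a b => Forces rel val w a → Forces rel val w b
  | w, tri a b => ∀ u v, rel w u v → Forces rel val u a →
      ∃ v', rel w u v' ∧ Forces rel val v' b

end Formula

/-- A Kripke model: a finite set of worlds, a ternary computability relation,
and a forcing relation between worlds and propositional variables. -/
structure KripkeModel where
  W : Type
  fin : Finite W
  rel : W → W → W → Prop
  val : W → ℕ → Prop

/-- A Kripke model is deterministic if for all worlds w, u there is at most
one v with u →_w v. -/
def KripkeModel.Deterministic (M : KripkeModel) : Prop :=
  ∀ w u v v', M.rel w u v → M.rel w u v' → v = v'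

/-- Forcing in a Kripke model. -/
def KripkeModel.Forces (M : KripkeModel) : M.W → Formula → Prop :=
  Formula.Forces M.rel M.val

/-- The standard enumeration of nondeterministic partial recursive functions:
ζ_w(u) = the set of possible outputs of machine (code) w on input u. -/
def zeta (w u : ℕ) : Set ℕ :=
  {v | ((Denumerable.ofNat Nat.Partrec.Code w).eval (Nat.pair u v)).Dom}

/-- The standard enumeration of deterministic partial recursive functions:
ξ_w(u) = the value of the partial recursive function with code w on input u. -/
def xi (w u : ℕ) : Part ℕ :=
  (Denumerable.ofNat Nat.Partrec.Code w).eval u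

namespace Formula

/-- Set semantics for nondeterministic partial recursive functions
(existential reading of ▷). -/
def semN (val : ℕ → Set ℕ) : Formula → Set ℕ
  | var p => val p
  | bot => ∅
  | imp a b => (Set.univ \ semN val a) ∪ semN val b
  | tri a b => {w | ∀ u ∈ semN val a, zeta w u ≠ ∅ → zeta w u ∩ semN val b ≠ ∅}

/-- Set semantics for deterministic partial recursive functions. -/
def semD (val : ℕ → Set ℕ) : Formula → Set ℕ
  | var p => val p
  | bot => ∅
  | imp a b => (Set.univ \ semD val a) ∪ semD val b
  | tri a b => {w | ∀ u ∈ semD val a, ∀ h : (xi w u).Dom, (xi w u).get h ∈ semD val b}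

/-- Universal set semantics for nondeterministic partial recursive functions:
every terminating computation path from φ* ends in ψ*. -/
def semU (val : ℕ → Set ℕ) : Formula → Set ℕ
  | var p => val p
  | bot => ∅
  | imp a b => (Set.univ \ semU val a) ∪ semU val b
  | tri a b => {w | ∀ u ∈ semU val a, zeta w u ⊆ semU val b}

/-- A canonical injective encoding of formulas as natural numbers. -/
def enc : Formula → ℕ
  | var n => 4 * n
  | bot => 1
  | imp a b => 4 * Nat.pair (enc a) (enc b) + 2
  | tri a b => 4 * Nat.pair (enc a) (enc b) + 3

end Formula
namespace Formula

theorem simNeg_eval (v : Formula → Bool) (hb : v bot = false)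
    (hi : ∀ a b, v (imp a b) = (!(v a) || v b)) : ∀ φ, v (simNeg φ) = !(v φ) := by
  intro φ
  rcases φ with n | _ | ⟨a, b⟩ | ⟨a, b⟩
  · simp [simNeg, neg, hi, hb]
  · simp [simNeg, neg, hi, hb]
  · rcases b with m | _ | ⟨x, y⟩ | ⟨x, y⟩ <;> simp [simNeg, neg, hi, hb]
  · simp [simNeg, neg, hi, hb]

/-- Tactic-friendly: all the taut lemmas we need. -/
theorem prv_imp_trans {d} {a b c : Formula} (h1 : Prv d (imp a b)) (h2 : Prv d (imp b c)) :
    Prv d (imp a c) := by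
  have t : Prv d (imp (imp a b) (imp (imp b c) (imp a c))) := by
    apply Prv.taut; intro v hb hi
    simp only [hi]; cases v a <;> cases v b <;> cases v c <;> rfl
  exact (t.mp h1).mp h2

theorem deriv_mono {d} {Δ Δ' : Set Formula} {φ} (h : Deriv d Δ φ) (hs : Δ ⊆ Δ') :
    Deriv d Δ' φ := by
  induction h with
  | hyp h => exact Deriv.hyp (hs h)
  | thm h => exact Deriv.thm h
  | mp _ _ ih1 ih2 => exact ih1.mp ih2

theorem prv_of_deriv_empty {d} {φ} (h : Deriv d (∅ : Set Formula) φ) : Prv d φ := by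
  induction h with
  | hyp h => exact absurd h (by simp)
  | thm h => exact h
  | mp _ _ ih1 ih2 => exact ih1.mp ih2

theorem deduction {d} {Δ : Set Formula} {ψ φ} (h : Deriv d (insert ψ Δ) φ) :
    Deriv d Δ (imp ψ φ) := by
  induction h with
  | @hyp χ h =>
    rcases h with h | h
    · subst h
      exact Deriv.thm (Prv.taut (by intro v hb hi; simp only [hi]; simp))
    · exact Deriv.mp
        (Deriv.thm (Prv.taut (by intro v hb hi; simp only [hi]; cases v χ <;> cases v ψ <;> rfl)))
        (Deriv.hyp h)
  | @thm χ h =>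
    exact Deriv.mp
      (Deriv.thm (Prv.taut (by intro v hb hi; simp only [hi]; cases v χ <;> cases v ψ <;> rfl)))
      (Deriv.thm h)
  | @mp χ ρ _ _ ih1 ih2 =>
    have k : Prv d (imp (imp ψ (imp χ ρ)) (imp (imp ψ χ) (imp ψ ρ))) := by
      apply Prv.taut; intro v hb hi
      simp only [hi]; cases v ψ <;> cases v χ <;> cases v ρ <;> rfl
    exact ((Deriv.thm k).mp ih1).mp ih2

/-- Disjunction of a list of formulas (empty disjunction is ⊥). -/
def disjList : List Formula → Formula
  | [] => bot
  | φ :: l => disj φ (disjList l)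

theorem conjList_eval (v : Formula → Bool) (hb : v bot = false)
    (hi : ∀ a b, v (imp a b) = (!(v a) || v b)) :
    ∀ L : List Formula, v (conjList L) = L.all fun x => v x := by
  intro L
  induction L with
  | nil => simp [conjList, top, neg, hi, hb]
  | cons x L ih => simp [conjList, conj, neg, hi, hb, ih]

theorem disjList_eval (v : Formula → Bool) (hb : v bot = false)
    (hi : ∀ a b, v (imp a b) = (!(v a) || v b)) :
    ∀ L : List Formula, v (disjList L) = L.any fun x => v x := by
  intro L
  induction L with
  | nil => simp [disjList, hb]
  | cons x L ih => simp [disjList, disj, neg, hi, hb, ih]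

theorem derivList {d} {φ} : ∀ L : List Formula, Deriv d {x | x ∈ L} φ →
    Prv d (imp (conjList L) φ) := by
  intro L
  induction L generalizing φ with
  | nil =>
    intro h
    have : Prv d φ := prv_of_deriv_empty (by convert h using 2; ext x; simp)
    refine Prv.mp (Prv.taut ?_) this
    intro v hb hi; simp only [hi, conjList, top, neg, hb]; cases v φ <;> rfl
  | cons a L ih =>
    intro h
    have h' : Deriv d (insert a {x | x ∈ L}) φ := by
      apply deriv_mono h; intro x hx; simp at hx ⊢; tauto
    have h2 := ih (deduction h')
    refine Prv.mp (Prv.taut ?_) h2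
    intro v hb hi
    simp only [hi, conjList, conj, neg, hb]
    cases v a <;> cases v (conjList L) <;> cases v φ <;> rfl

theorem mem_conjList {d} {x : Formula} : ∀ {L : List Formula}, x ∈ L →
    Prv d (imp (conjList L) x) := by
  intro L
  induction L with
  | nil => simp
  | cons a L ih =>
    intro h
    rcases List.mem_cons.1 h with h | h
    · subst h
      apply Prv.taut; intro v hb hi
      simp only [conjList, conj, neg, hi, hb]
      cases v x <;> cases v (conjList L) <;> rfl
    · refine prv_imp_trans (Prv.taut ?_) (ih h)
      intro v hb hi
      simp only [conjList, conj, neg, hi, hb]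
      cases v a <;> cases v (conjList L) <;> rfl

theorem conjList_sub {d} : ∀ {L' L : List Formula}, (∀ x ∈ L', x ∈ L) →
    Prv d (imp (conjList L) (conjList L')) := by
  intro L'
  induction L' with
  | nil =>
    intro L _
    apply Prv.taut; intro v hb hi
    simp only [conjList, top, neg, hi, hb]; cases v (conjList L) <;> rfl
  | cons a L' ih =>
    intro L h
    have h1 : Prv d (imp (conjList L) a) := mem_conjList (h a (by simp))
    have h2 : Prv d (imp (conjList L) (conjList L')) := ih fun x hx => h x (by simp [hx])
    have t : Prv d (imp (imp (conjList L) a) (imp (imp (conjList L) (conjList L'))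
        (imp (conjList L) (conjList (a :: L'))))) := by
      apply Prv.taut; intro v hb hi
      simp only [conjList, conj, neg, hi, hb]
      cases v (conjList L) <;> cases v a <;> cases v (conjList L') <;> rfl
    exact (t.mp h1).mp h2

theorem mem_disjList {d} {x : Formula} : ∀ {L : List Formula}, x ∈ L →
    Prv d (imp x (disjList L)) := by
  intro L
  induction L with
  | nil => simp
  | cons a L ih =>
    intro h
    rcases List.mem_cons.1 h with h | h
    · subst h
      apply Prv.taut; intro v hb hi
      simp only [disjList, disj, neg, hi, hb]
      cases v x <;> cases v (disjList L) <;> rfl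
    · refine prv_imp_trans (ih h) (Prv.taut ?_)
      intro v hb hi
      simp only [disjList, disj, neg, hi, hb]
      cases v a <;> cases v (disjList L) <;> rfl

theorem disjList_prune {d} {L' : List Formula} : ∀ {L : List Formula},
    (∀ x ∈ L, x ∈ L' ∨ Prv d (neg x)) → Prv d (imp (disjList L) (disjList L')) := by
  intro L
  induction L with
  | nil =>
    intro _
    apply Prv.taut; intro v hb hi
    simp only [disjList, hi, hb]; rfl
  | cons a L ih =>
    intro h
    have h2 : Prv d (imp (disjList L) (disjList L')) := ih fun x hx => h x (by simp [hx])
    rcases h a (by simp) with ha | ha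
    · have h1 : Prv d (imp a (disjList L')) := mem_disjList ha
      have t : Prv d (imp (imp a (disjList L')) (imp (imp (disjList L) (disjList L'))
          (imp (disjList (a :: L)) (disjList L')))) := by
        apply Prv.taut; intro v hb hi
        simp only [disjList, disj, neg, hi, hb]
        cases v a <;> cases v (disjList L) <;> cases v (disjList L') <;> rfl
      exact (t.mp h1).mp h2
    · have t : Prv d (imp (neg a) (imp (imp (disjList L) (disjList L'))
          (imp (disjList (a :: L)) (disjList L')))) := by
        apply Prv.taut; intro v hb hi
        simp only [disjList, disj, neg, hi, hb]
        cases v a <;> cases v (disjList L) <;> cases v (disjList L') <;> rfl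
      exact (t.mp ha).mp h2

end Formula
namespace Formula

theorem tri_combine {Δ : Set Formula} : ∀ L : List (Formula × Formula),
    (∀ p ∈ L, Deriv true Δ (tri p.1 p.2)) →
    Deriv true Δ (tri (conjList (L.map Prod.fst)) (conjList (L.map Prod.snd))) := by
  intro L
  induction L with
  | nil => exact fun _ => Deriv.thm (Prv.a3 _)
  | cons p L ih =>
    intro h
    have hd := h p (by simp)
    have hL := ih fun q hq => h q (by simp [hq])
    simp only [List.map_cons, conjList]
    set A := conjList (L.map Prod.fst)
    set B := conjList (L.map Prod.snd)
    have p1 : Prv true (imp (conj p.1 A) p.1) := by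
      apply Prv.taut; intro v hb hi
      simp only [conj, neg, hi, hb]; cases v p.1 <;> cases v A <;> rfl
    have p2 : Prv true (imp (conj p.1 A) A) := by
      apply Prv.taut; intro v hb hi
      simp only [conj, neg, hi, hb]; cases v p.1 <;> cases v A <;> rfl
    have rfl1 : ∀ c : Formula, Prv true (imp c c) := fun c =>
      Prv.taut (by intro v hb hi; simp only [hi]; simp)
    have t1 : Deriv true Δ (tri (conj p.1 A) p.2) :=
      Deriv.mp (Deriv.thm (Prv.mono p1 (rfl1 _))) hd
    have t2 : Deriv true Δ (tri (conj p.1 A) B) :=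
      Deriv.mp (Deriv.thm (Prv.mono p2 (rfl1 _))) hL
    exact Deriv.mp (Deriv.mp (Deriv.thm (Prv.a4 _ _ _)) t1) t2

theorem tri_disj {Δ : Set Formula} {b : Formula} : ∀ L : List Formula,
    (∀ x ∈ L, Deriv true Δ (tri x b)) → Deriv true Δ (tri (disjList L) b) := by
  intro L
  induction L with
  | nil => exact fun _ => Deriv.thm (Prv.a2 _)
  | cons x L ih =>
    intro h
    exact Deriv.mp (Deriv.mp (Deriv.thm (Prv.a1 x b (disjList L))) (h x (by simp)))
      (ih fun y hy => h y (by simp [hy]))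

/-- From φ ∈ w and ∼φ ∈ w derive ⊥. -/
theorem deriv_bot_of_sim {d} {Δ : Set Formula} {φ} (h1 : Deriv d Δ φ)
    (h2 : Deriv d Δ (simNeg φ)) : Deriv d Δ bot := by
  have t : Prv d (imp φ (imp (simNeg φ) bot)) := by
    apply Prv.taut; intro v hb hi
    simp only [hi, simNeg_eval v hb hi]; cases v φ <;> rfl
  exact ((Deriv.thm t).mp h1).mp h2

theorem maxcons_not_both {d} {Φ w : Finset Formula} (hw : MaxCons d Φ w) {φ}
    (h1 : φ ∈ w) (h2 : simNeg φ ∈ w) : False :=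
  hw.2.1 (deriv_bot_of_sim (Deriv.hyp h1) (Deriv.hyp h2))

theorem maxcons_mem {d} {Φ w : Finset Formula} (hw : MaxCons d Φ w) {φ} (hφ : φ ∈ Φ)
    (hd : Deriv d ↑w φ) : φ ∈ w := by
  rcases hw.2.2 φ hφ with h | h
  · exact h
  · exact absurd (deriv_bot_of_sim hd (Deriv.hyp h)) hw.2.1

theorem maxcons_imp {d} {Φ w : Finset Formula} (hsub : SubClosed Φ) (hw : MaxCons d Φ w)
    {a b} (hab : imp a b ∈ Φ) : imp a b ∈ w ↔ (a ∈ w → b ∈ w) := by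
  obtain ⟨ha, hb⟩ := hsub.1 a b hab
  constructor
  · intro h hA
    exact maxcons_mem hw hb ((Deriv.hyp h).mp (Deriv.hyp hA))
  · intro h
    by_contra hn
    rcases hw.2.2 _ hab with h' | h'
    · exact hn h'
    · -- ∼(a→b) ∈ w
      have ta : Prv d (imp (simNeg (imp a b)) a) := by
        apply Prv.taut; intro v hb' hi
        simp only [hi, simNeg_eval v hb' hi]; cases v a <;> cases v b <;> rfl
      have tb : Prv d (imp (simNeg (imp a b)) (neg b)) := by
        apply Prv.taut; intro v hb' hi
        simp only [neg, hi, hb', simNeg_eval v hb' hi]; cases v a <;> cases v b <;> rfl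
      have hA : a ∈ w := maxcons_mem hw ha ((Deriv.thm ta).mp (Deriv.hyp h'))
      have hB : b ∈ w := h hA
      have : Deriv d ↑w bot :=
        ((Deriv.thm tb).mp (Deriv.hyp h')).mp (Deriv.hyp hB)
      exact hw.2.1 this

theorem lindenbaum {d} {Φ : Finset Formula} (hsim : SimClosed Φ) {S : Finset Formula}
    (hS : S ⊆ Φ) (hc : Consistent d ↑S) : ∃ w, MaxCons d Φ w ∧ S ⊆ w := by
  classical
  suffices h : ∀ L : List Formula, (∀ x ∈ L, x ∈ Φ) →
      ∀ S : Finset Formula, S ⊆ Φ → Consistent d ↑S →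
      ∃ w : Finset Formula, S ⊆ w ∧ w ⊆ Φ ∧ Consistent d ↑w ∧
        ∀ φ ∈ L, φ ∈ w ∨ simNeg φ ∈ w by
    obtain ⟨w, h1, h2, h3, h4⟩ := h Φ.toList (by simp) S hS hc
    exact ⟨w, ⟨h2, h3, fun φ hφ => h4 φ (by simpa using hφ)⟩, h1⟩
  intro L
  induction L with
  | nil => exact fun _ S h1 h2 => ⟨S, le_refl _, h1, h2, by simp⟩
  | cons a L ih =>
    intro hL S hSΦ hScons
    have haΦ : a ∈ Φ := hL a (by simp)
    by_cases hca : Consistent d ↑(insert a S)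
    · obtain ⟨w, h1, h2, h3, h4⟩ := ih (fun x hx => hL x (by simp [hx])) _
        (Finset.insert_subset haΦ hSΦ) hca
      refine ⟨w, le_trans (Finset.subset_insert _ _) h1, h2, h3, ?_⟩
      intro φ hφ
      rcases List.mem_cons.1 hφ with h | h
      · exact Or.inl (h ▸ h1 (Finset.mem_insert_self _ _))
      · exact h4 φ h
    · have hca' : Consistent d ↑(insert (simNeg a) S) := by
        intro hder
        apply hScons
        have d1 : Deriv d ↑S (imp a bot) := by
          apply deduction
          simp only [Consistent, not_not] at hca
          exact deriv_mono hca (by rw [Finset.coe_insert])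
        have d2 : Deriv d ↑S (imp (simNeg a) bot) := by
          apply deduction
          exact deriv_mono hder (by rw [Finset.coe_insert])
        have t : Prv d (imp (imp a bot) (imp (imp (simNeg a) bot) bot)) := by
          apply Prv.taut; intro v hb hi
          simp only [hi, hb, simNeg_eval v hb hi]; cases v a <;> rfl
        exact ((Deriv.thm t).mp d1).mp d2
      obtain ⟨w, h1, h2, h3, h4⟩ := ih (fun x hx => hL x (by simp [hx])) _
        (Finset.insert_subset (hsim a haΦ) hSΦ) hca'
      refine ⟨w, le_trans (Finset.subset_insert _ _) h1, h2, h3, ?_⟩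
      intro φ hφ
      rcases List.mem_cons.1 hφ with h | h
      · exact Or.inr (h ▸ h1 (Finset.mem_insert_self _ _))
      · exact h4 φ h

end Formula
namespace Formula

/-- The canonical relation. -/
def Rel (w u v : Finset Formula) : Prop := ∀ a b, tri a b ∈ w → a ∈ u → b ∈ v

theorem key_lemma {Φ : Finset Formula} (hsub : SubClosed Φ) (hsim : SimClosed Φ)
    {w : Finset Formula} (hw : MaxCons true Φ w) {a b : Formula} (hab : tri a b ∈ Φ)
    (h : tri a b ∉ w) :
    ∃ u v, MaxCons true Φ u ∧ MaxCons true Φ v ∧ a ∈ u ∧ b ∉ v ∧ Rel w u v := by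
  classical
  by_contra hcon
  have haΦ : a ∈ Φ := (hsub.2 a b hab).1
  have hbΦ : b ∈ Φ := (hsub.2 a b hab).2
  apply h
  apply maxcons_mem hw hab
  -- goal : Deriv true ↑w (tri a b)
  set Lu : Finset Formula → List (Formula × Formula) := fun u =>
    (Φ.toList ×ˢ Φ.toList).filter fun p => decide (tri p.1 p.2 ∈ w ∧ p.1 ∈ u) with hLu
  have memLu : ∀ u p, p ∈ Lu u ↔ p.1 ∈ Φ ∧ p.2 ∈ Φ ∧ tri p.1 p.2 ∈ w ∧ p.1 ∈ u := by
    intro u p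
    obtain ⟨p1, p2⟩ := p
    simp [hLu, List.mem_filter, List.mem_product, Finset.mem_toList]
    tauto
  have rfl_imp : ∀ c : Formula, Prv true (imp c c) := fun c =>
    Prv.taut (by intro v hb hi; simp only [hi]; simp)
  have step1 : ∀ u, MaxCons true Φ u → a ∈ u →
      Prv true (imp (conjList ((Lu u).map Prod.snd)) b) := by
    intro u hu hau
    have hSsub : insert (simNeg b) ((Lu u).map Prod.snd).toFinset ⊆ Φ := by
      apply Finset.insert_subset (hsim b hbΦ)
      intro x hx
      simp only [List.mem_toFinset, List.mem_map] at hx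
      obtain ⟨p, hp, rfl⟩ := hx
      exact ((memLu u p).1 hp).2.1
    have hinc : ¬ Consistent true ↑(insert (simNeg b) ((Lu u).map Prod.snd).toFinset) := by
      intro hcons
      obtain ⟨v, hv, hSv⟩ := lindenbaum hsim hSsub hcons
      apply hcon
      refine ⟨u, v, hu, hv, hau, ?_, ?_⟩
      · intro hbv
        exact maxcons_not_both hv hbv (hSv (Finset.mem_insert_self _ _))
      · intro a' b' ht ha'
        have hp : (a', b') ∈ Lu u := by
          rw [memLu]
          have htΦ : tri a' b' ∈ Φ := hw.1 ht
          exact ⟨(hsub.2 a' b' htΦ).1, (hsub.2 a' b' htΦ).2, ht, ha'⟩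
        apply hSv
        apply Finset.mem_insert_of_mem
        simp only [List.mem_toFinset, List.mem_map]
        exact ⟨(a', b'), hp, rfl⟩
    simp only [Consistent, not_not] at hinc
    have hcoe : (↑(insert (simNeg b) ((Lu u).map Prod.snd).toFinset) : Set Formula)
        = {x | x ∈ simNeg b :: (Lu u).map Prod.snd} := by
      ext x; simp
    rw [hcoe] at hinc
    have h2 := derivList _ hinc
    refine Prv.mp (Prv.taut ?_) h2
    intro v hb hi
    simp only [conjList, conj, neg, hi, hb, simNeg_eval v hb hi]
    cases v b <;> cases v (conjList ((Lu u).map Prod.snd)) <;> simp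
  have step2 : ∀ u, MaxCons true Φ u → a ∈ u →
      Deriv true ↑w (tri (conjList u.toList) b) := by
    intro u hu hau
    have hc : Deriv true ↑w (tri (conjList ((Lu u).map Prod.fst))
        (conjList ((Lu u).map Prod.snd))) :=
      tri_combine _ fun p hp => Deriv.hyp (Finset.mem_coe.2 ((memLu u p).1 hp).2.2.1)
    have m1 : Prv true (imp (conjList u.toList) (conjList ((Lu u).map Prod.fst))) := by
      apply conjList_sub
      intro x hx
      simp only [List.mem_map] at hx
      obtain ⟨p, hp, rfl⟩ := hx
      exact Finset.mem_toList.2 ((memLu u p).1 hp).2.2.2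
    exact Deriv.mp (Deriv.thm (Prv.mono m1 (step1 u hu hau))) hc
  set χ : Finset Formula → Formula := fun u => conjList u.toList with hχ
  set Us : List (Finset Formula) :=
    (Φ.powerset.filter fun u => a ∈ u ∧ ∀ φ ∈ Φ, φ ∈ u ∨ simNeg φ ∈ u).toList with hUs
  set Usc : List (Finset Formula) := Us.filter fun u => decide (Consistent true ↑u) with hUsc
  have memUs : ∀ u, u ∈ Us ↔ u ⊆ Φ ∧ a ∈ u ∧ ∀ φ ∈ Φ, φ ∈ u ∨ simNeg φ ∈ u := by
    intro u; simp [hUs]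
  have hTri : Deriv true ↑w (tri (disjList (Usc.map χ)) b) := by
    apply tri_disj
    intro x hx
    simp only [List.mem_map] at hx
    obtain ⟨u, hu, rfl⟩ := hx
    simp only [hUsc, List.mem_filter, decide_eq_true_eq] at hu
    obtain ⟨hu1, hu2⟩ := hu
    rw [memUs] at hu1
    exact step2 u ⟨hu1.1, hu2, hu1.2.2⟩ hu1.2.1
  have hpa : Prv true (imp a (disjList (Us.map χ))) := by
    apply Prv.taut
    intro v hb hi
    rw [hi]
    cases hva : v a
    · rfl
    · suffices hd : v (disjList (Us.map χ)) = true by rw [hd]; rfl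
      rw [disjList_eval v hb hi, List.any_eq_true]
      refine ⟨χ (Φ.filter fun x => v x = true), List.mem_map.2
        ⟨Φ.filter fun x => v x = true, ?_, rfl⟩, ?_⟩
      · rw [memUs]
        refine ⟨Finset.filter_subset _ _, Finset.mem_filter.2 ⟨haΦ, hva⟩, ?_⟩
        intro φ hφ
        cases hvφ : v φ
        · right
          exact Finset.mem_filter.2 ⟨hsim φ hφ, by rw [simNeg_eval v hb hi, hvφ]; rfl⟩
        · left; exact Finset.mem_filter.2 ⟨hφ, hvφ⟩
      · rw [hχ, conjList_eval v hb hi, List.all_eq_true]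
        intro x hx
        exact (Finset.mem_filter.1 (Finset.mem_toList.1 hx)).2
  have hprune : Prv true (imp (disjList (Us.map χ)) (disjList (Usc.map χ))) := by
    apply disjList_prune
    intro x hx
    simp only [List.mem_map] at hx
    obtain ⟨u, hu, rfl⟩ := hx
    by_cases hcu : Consistent true ↑u
    · left
      exact List.mem_map.2 ⟨u, by simp [hUsc, List.mem_filter, hu, hcu], rfl⟩
    · right
      simp only [Consistent, not_not] at hcu
      have hcoe : (↑u : Set Formula) = {x | x ∈ u.toList} := by ext x; simp
      rw [hcoe] at hcu
      exact derivList _ hcu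
  exact Deriv.mp (Deriv.thm (Prv.mono (prv_imp_trans hpa hprune) (rfl_imp b))) hTri

end Formula
namespace Formula

/-- Subformulas of a formula. -/
def subf : Formula → Finset Formula
  | var n => {var n}
  | bot => {bot}
  | imp a b => insert (imp a b) (subf a ∪ subf b)
  | tri a b => insert (tri a b) (subf a ∪ subf b)

theorem mem_subf_self : ∀ φ : Formula, φ ∈ subf φ := by
  intro φ; cases φ <;> simp [subf]

theorem subf_closed : ∀ χ : Formula, SubClosed (subf χ) := by
  intro χ
  induction χ with
  | var n => exact ⟨fun a b h => by simp [subf] at h, fun a b h => by simp [subf] at h⟩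
  | bot => exact ⟨fun a b h => by simp [subf] at h, fun a b h => by simp [subf] at h⟩
  | imp c d ihc ihd =>
    constructor
    · intro a b h
      simp only [subf, Finset.mem_insert, Finset.mem_union] at h
      rcases h with h | h | h
      · obtain ⟨rfl, rfl⟩ : a = c ∧ b = d := by
          injection h with h1 h2; exact ⟨h1, h2⟩
        exact ⟨by simp [subf, mem_subf_self], by simp [subf, mem_subf_self]⟩
      · have := ihc.1 a b h; exact ⟨by simp [subf, this.1], by simp [subf, this.2]⟩
      · have := ihd.1 a b h; exact ⟨by simp [subf, this.1], by simp [subf, this.2]⟩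
    · intro a b h
      simp only [subf, Finset.mem_insert, Finset.mem_union] at h
      rcases h with h | h | h
      · exact absurd h (by simp)
      · have := ihc.2 a b h; exact ⟨by simp [subf, this.1], by simp [subf, this.2]⟩
      · have := ihd.2 a b h; exact ⟨by simp [subf, this.1], by simp [subf, this.2]⟩
  | tri c d ihc ihd =>
    constructor
    · intro a b h
      simp only [subf, Finset.mem_insert, Finset.mem_union] at h
      rcases h with h | h | h
      · exact absurd h (by simp)
      · have := ihc.1 a b h; exact ⟨by simp [subf, this.1], by simp [subf, this.2]⟩
      · have := ihd.1 a b h; exact ⟨by simp [subf, this.1], by simp [subf, this.2]⟩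
    · intro a b h
      simp only [subf, Finset.mem_insert, Finset.mem_union] at h
      rcases h with h | h | h
      · obtain ⟨rfl, rfl⟩ : a = c ∧ b = d := by
          injection h with h1 h2; exact ⟨h1, h2⟩
        exact ⟨by simp [subf, mem_subf_self], by simp [subf, mem_subf_self]⟩
      · have := ihc.2 a b h; exact ⟨by simp [subf, this.1], by simp [subf, this.2]⟩
      · have := ihd.2 a b h; exact ⟨by simp [subf, this.1], by simp [subf, this.2]⟩

theorem simNeg_cases : ∀ ψ : Formula, (∃ c, ψ = imp c bot ∧ simNeg ψ = c) ∨
    simNeg ψ = imp ψ bot := by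
  intro ψ
  rcases ψ with n | _ | ⟨a, b⟩ | ⟨a, b⟩
  · right; rfl
  · right; rfl
  · rcases b with m | _ | ⟨x, y⟩ | ⟨x, y⟩
    · right; rfl
    · left; exact ⟨a, rfl, rfl⟩
    · right; rfl
    · right; rfl
  · right; rfl

/-- The adequate set generated by a formula. -/
noncomputable def closure (χ : Formula) : Finset Formula :=
  insert bot (insert top (subf χ ∪ (subf χ).image simNeg))

theorem mem_closure_self (χ : Formula) : χ ∈ closure χ := by
  simp [closure, mem_subf_self]

theorem closure_subClosed (χ : Formula) : SubClosed (closure χ) := by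
  constructor
  · intro a b h
    simp only [closure, Finset.mem_insert, Finset.mem_union, Finset.mem_image] at h
    rcases h with h | h | h | ⟨ψ, hψ, h⟩
    · exact absurd h (by simp [top, neg])
    · obtain ⟨rfl, rfl⟩ : a = bot ∧ b = bot := by
        rw [top, neg] at h; injection h.symm with h1 h2; exact ⟨h1.symm, h2.symm⟩
      simp [closure]
    · have := (subf_closed χ).1 a b h
      constructor <;> simp [closure, this.1, this.2]
    · rcases simNeg_cases ψ with ⟨c, rfl, hc⟩ | hc
      · rw [hc] at h
        subst h
        have := (subf_closed χ).1 a b ((subf_closed χ).1 _ _ hψ).1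
        constructor <;> simp [closure, this.1, this.2]
      · rw [hc] at h
        obtain ⟨rfl, rfl⟩ : a = ψ ∧ b = bot := by
          injection h with h1 h2; exact ⟨h1.symm, h2.symm⟩
        constructor <;> simp [closure, hψ]
  · intro a b h
    simp only [closure, Finset.mem_insert, Finset.mem_union, Finset.mem_image] at h
    rcases h with h | h | h | ⟨ψ, hψ, h⟩
    · exact absurd h (by simp)
    · exact absurd h (by simp [top, neg])
    · have := (subf_closed χ).2 a b h
      constructor <;> simp [closure, this.1, this.2]
    · rcases simNeg_cases ψ with ⟨c, rfl, hc⟩ | hc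
      · rw [hc] at h
        subst h
        have := (subf_closed χ).2 a b ((subf_closed χ).1 _ _ hψ).1
        constructor <;> simp [closure, this.1, this.2]
      · rw [hc] at h; exact absurd h (by simp)

theorem closure_simClosed (χ : Formula) : SimClosed (closure χ) := by
  intro φ hφ
  simp only [closure, Finset.mem_insert, Finset.mem_union, Finset.mem_image] at hφ ⊢
  rcases hφ with rfl | rfl | h | ⟨ψ, hψ, rfl⟩
  · right; left; rfl
  · left; rfl
  · right; right; right; exact ⟨φ, h, rfl⟩
  · rcases simNeg_cases ψ with ⟨c, rfl, hc⟩ | hc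
    · rw [hc]
      right; right; right
      exact ⟨c, ((subf_closed χ).1 _ _ hψ).1, rfl⟩
    · rw [hc]
      right; right; left
      show simNeg (imp ψ bot) ∈ subf χ
      have : simNeg (imp ψ bot) = ψ := rfl
      rw [this]; exact hψ

theorem mem_semU_imp {val : ℕ → Set ℕ} {w : ℕ} {a b : Formula} :
    w ∈ semU val (imp a b) ↔ (w ∈ semU val a → w ∈ semU val b) := by
  simp [semU]; tauto

theorem semU_disj (val : ℕ → Set ℕ) (a b : Formula) :
    semU val (disj a b) = semU val a ∪ semU val b := by
  ext w; simp [disj, neg, semU]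

theorem semU_conj (val : ℕ → Set ℕ) (a b : Formula) :
    semU val (conj a b) = semU val a ∩ semU val b := by
  ext w; simp [conj, neg, semU]

theorem mem_semU_tri {val : ℕ → Set ℕ} {w : ℕ} {a b : Formula} :
    w ∈ semU val (tri a b) ↔ ∀ u ∈ semU val a, zeta w u ⊆ semU val b := Iff.rfl

theorem semU_top (val : ℕ → Set ℕ) : semU val top = Set.univ := by
  ext w; simp [top, neg, semU]

theorem sound {d : Bool} {φ : Formula} (h : Prv d φ) (val : ℕ → Set ℕ) :
    semU val φ = Set.univ := by
  classical
  induction h with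
  | @taut _ φ ht =>
    ext w
    simp only [Set.mem_univ, iff_true]
    have := ht (fun θ => if w ∈ semU val θ then true else false)
      (by simp [semU]) (by
        intro a b
        by_cases ha : w ∈ semU val a <;> by_cases hb : w ∈ semU val b <;>
          simp [ha, hb, mem_semU_imp.2, if_pos, if_neg] <;>
          simp [mem_semU_imp, ha, hb])
    by_cases hw : w ∈ semU val φ
    · exact hw
    · simp [hw] at this
  | a1 a b c =>
    ext w
    simp only [Set.mem_univ, iff_true, mem_semU_imp, mem_semU_tri]
    intro h1 h2 u hu
    rw [semU_disj] at hu
    rcases hu with hu | hu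
    · exact h1 u hu
    · exact h2 u hu
  | a2 a =>
    ext w
    simp [semU]
  | a3 a =>
    ext w
    simp [semU, semU_top]
  | a4 a b c =>
    ext w
    simp only [Set.mem_univ, iff_true, mem_semU_imp, mem_semU_tri]
    intro h1 h2 u hu v hv
    rw [semU_conj]
    exact ⟨h1 u hu hv, h2 u hu hv⟩
  | mp h1 h2 ih1 ih2 =>
    ext w
    simp only [Set.mem_univ, iff_true]
    have hw1 : w ∈ semU val _ := ih1 ▸ Set.mem_univ w
    have hw2 : w ∈ semU val _ := ih2 ▸ Set.mem_univ w
    exact mem_semU_imp.1 hw1 hw2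
  | @mono _ a1 a2 b1 b2 h1 h2 ih1 ih2 =>
    ext w
    simp only [Set.mem_univ, iff_true, mem_semU_imp]
    intro hw
    rw [mem_semU_tri] at hw ⊢
    intro u hu v hv
    have hu2 : u ∈ semU val a2 := mem_semU_imp.1 (ih1 ▸ Set.mem_univ u) hu
    have := hw u hu2 hv
    exact mem_semU_imp.1 (ih2 ▸ Set.mem_univ v) this

end Formula
open Nat.Partrec Nat.Partrec.Code in
theorem codes_exist (T : List (ℕ × ℕ × ℕ)) :
    ∃ c : ℕ → ℕ, Function.Injective c ∧
      ∀ i u, zeta (c i) u = {v | ∃ t ∈ T, t.1 = i ∧ u = c t.2.1 ∧ v = c t.2.2} := by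
  classical
  -- g e j = encode (curry (ofNat Code e) j)
  set g : ℕ → ℕ → ℕ := fun e j => Encodable.encode (curry (Denumerable.ofNat Code e) j) with hg
  have hgp : Primrec₂ g := by
    exact Primrec.encode.comp₂ (primrec₂_curry.comp₂
      ((Primrec.ofNat Code).comp₂ Primrec₂.left) Primrec₂.right)
  -- the boolean condition
  set cnd : ℕ → ℕ → Bool := fun e n =>
    T.any fun t => (n.unpair.1 == t.1) && (n.unpair.2.unpair.1 == g e t.2.1)
      && (n.unpair.2.unpair.2 == g e t.2.2) with hcnd
  have hcndp : Computable₂ cnd := by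
    have : ∀ (L : List (ℕ × ℕ × ℕ)), Primrec₂ (fun e n =>
        L.any fun t => (n.unpair.1 == t.1) && (n.unpair.2.unpair.1 == g e t.2.1)
          && (n.unpair.2.unpair.2 == g e t.2.2) : ℕ → ℕ → Bool) := by
      intro L
      induction L with
      | nil => simpa using Primrec₂.const false
      | cons t L ih =>
        have h1 : Primrec₂ (fun e n => (n.unpair.1 == t.1) : ℕ → ℕ → Bool) := by
          exact Primrec.beq.comp₂ ((Primrec.fst.comp Primrec.unpair).comp₂ Primrec₂.right)
            (Primrec₂.const t.1)
        have h2 : Primrec₂ (fun e n => (n.unpair.2.unpair.1 == g e t.2.1) : ℕ → ℕ → Bool) := by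
          exact Primrec.beq.comp₂
            ((Primrec.fst.comp (Primrec.unpair.comp (Primrec.snd.comp Primrec.unpair))).comp₂
              Primrec₂.right)
            (hgp.comp₂ Primrec₂.left (Primrec₂.const t.2.1))
        have h3 : Primrec₂ (fun e n => (n.unpair.2.unpair.2 == g e t.2.2) : ℕ → ℕ → Bool) := by
          exact Primrec.beq.comp₂
            ((Primrec.snd.comp (Primrec.unpair.comp (Primrec.snd.comp Primrec.unpair))).comp₂
              Primrec₂.right)
            (hgp.comp₂ Primrec₂.left (Primrec₂.const t.2.2))
        have := (Primrec.dom_bool₂ or).comp₂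
          ((Primrec.dom_bool₂ and).comp₂ ((Primrec.dom_bool₂ and).comp₂ h1 h2) h3) ih
        exact this.of_eq (by intro e n; simp [List.any_cons])
    exact (this T).to_comp
  -- the partial function
  have hF : Partrec₂ (fun (c : Code) (n : ℕ) =>
      ((bif cnd (Encodable.encode c) n then some 0 else none : Option ℕ) : Part ℕ)) := by
    apply Computable.ofOption
    exact Computable.cond (hcndp.comp (Computable.encode.comp Computable.fst) Computable.snd)
      (Computable.const (some 0)) (Computable.const none)
  obtain ⟨c₀, hc₀⟩ := fixed_point₂ hF
  refine ⟨fun i => g (Encodable.encode c₀) i, ?_, ?_⟩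
  · intro i j h
    simpa using (curry_inj (Encodable.encode_injective h)).2
  · intro i u
    ext v
    have : (Denumerable.ofNat Code (g (Encodable.encode c₀) i)) = curry c₀ i := by
      simp [hg]
    simp only [zeta, Set.mem_setOf_eq, this, eval_curry, hc₀]
    cases h : cnd (Encodable.encode c₀) (Nat.pair i (Nat.pair u v)) <;>
      simp only [hcnd, List.any_eq_true, Bool.and_eq_true, beq_iff_eq, Nat.unpair_pair,
        Bool.not_eq_true, List.any_eq_false] at h <;>
      simp only [Bool.cond_false, Bool.cond_true, Part.coe_none, Part.not_none_dom,
        Part.coe_some, Part.some_dom, false_iff, true_iff]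
    · rintro ⟨t, ht, rfl, rfl, rfl⟩
      have := h t ht
      simp at this
    · obtain ⟨t, ht, ⟨h1, h2⟩, h3⟩ := h
      exact ⟨t, ht, h1.symm, h2, h3⟩
open Formula in
theorem completeness_Rd (φ : Formula) (h : ¬ Prv true φ) :
    ∃ val : ℕ → Set ℕ, semU val φ ≠ Set.univ := by
  classical
  set Φ := closure φ with hΦ
  have hsub := closure_subClosed φ
  have hsim := closure_simClosed φ
  have hφΦ : φ ∈ Φ := mem_closure_self φ
  have hcons : Consistent true ↑({simNeg φ} : Finset Formula) := by
    intro hd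
    apply h
    have hd' : Deriv true (insert (simNeg φ) ∅) bot := deriv_mono hd (by simp)
    have h1 : Prv true (imp (simNeg φ) bot) := prv_of_deriv_empty (deduction hd')
    refine Prv.mp (Prv.taut ?_) h1
    intro v hb hi
    simp only [hi, hb, simNeg_eval v hb hi]
    cases v φ <;> rfl
  obtain ⟨w₀, hw₀, hw₀m⟩ := lindenbaum hsim
    (by simp only [Finset.singleton_subset_iff]; exact hsim φ hφΦ) hcons
  have hφw₀ : φ ∉ w₀ := fun hh =>
    maxcons_not_both hw₀ hh (hw₀m (Finset.mem_singleton_self _))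
  -- the worlds
  set Ws : List (Finset Formula) :=
    (Φ.powerset.filter fun u => MaxCons true Φ u).toList with hWs
  set k := Ws.length with hk
  set wof : ℕ → Finset Formula := fun i => Ws.getD i ∅ with hwof
  have hmax : ∀ i, i < k → MaxCons true Φ (wof i) := by
    intro i hi
    have : wof i ∈ Ws := by
      rw [hwof]
      simp only [List.getD_eq_getElem _ _ hi]
      exact List.getElem_mem hi
    rw [hWs] at this
    exact (Finset.mem_filter.1 (Finset.mem_toList.1 this)).2
  have hfind : ∀ u, MaxCons true Φ u → ∃ i, i < k ∧ wof i = u := by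
    intro u hu
    have : u ∈ Ws := by
      rw [hWs]
      exact Finset.mem_toList.2 (Finset.mem_filter.2 ⟨Finset.mem_powerset.2 hu.1, hu⟩)
    obtain ⟨i, hi, hg⟩ := List.mem_iff_getElem.1 this
    exact ⟨i, hi, by rw [hwof]; simp only [List.getD_eq_getElem _ _ hi]; exact hg⟩
  -- the computability structure
  set T : List (ℕ × ℕ × ℕ) :=
    ((List.range k ×ˢ (List.range k ×ˢ List.range k)).filter
      fun t => decide (Rel (wof t.1) (wof t.2.1) (wof t.2.2))) with hT
  have memT : ∀ t : ℕ × ℕ × ℕ, t ∈ T ↔ t.1 < k ∧ t.2.1 < k ∧ t.2.2 < k ∧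
      Rel (wof t.1) (wof t.2.1) (wof t.2.2) := by
    intro t
    obtain ⟨i, j, l⟩ := t
    simp [hT, List.mem_filter, List.mem_product, List.mem_range]
    tauto
  obtain ⟨c, hcinj, hczeta⟩ := codes_exist T
  set val : ℕ → Set ℕ := fun p => {x | ∃ i, i < k ∧ x = c i ∧ var p ∈ wof i} with hval
  have hz : ∀ i u v, v ∈ zeta (c i) u ↔
      ∃ j l, i < k ∧ j < k ∧ l < k ∧ Rel (wof i) (wof j) (wof l) ∧ u = c j ∧ v = c l := by
    intro i u v
    rw [hczeta i u]
    simp only [Set.mem_setOf_eq]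
    constructor
    · rintro ⟨t, ht, h1, h2, h3⟩
      rw [memT] at ht
      exact ⟨t.2.1, t.2.2, h1 ▸ ht.1, ht.2.1, ht.2.2.1, h1 ▸ ht.2.2.2, h2, h3⟩
    · rintro ⟨j, l, hi, hj, hl, hr, rfl, rfl⟩
      exact ⟨(i, j, l), (memT _).2 ⟨hi, hj, hl, hr⟩, rfl, rfl, rfl⟩
  -- truth lemma
  have truth : ∀ θ : Formula, θ ∈ Φ → ∀ i, i < k → (c i ∈ semU val θ ↔ θ ∈ wof i) := by
    intro θ
    induction θ with
    | var p =>
      intro hθ i hi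
      simp only [semU, hval, Set.mem_setOf_eq]
      constructor
      · rintro ⟨j, hj, he, hm⟩
        rwa [hcinj he] 
      · intro hm
        exact ⟨i, hi, rfl, hm⟩
    | bot =>
      intro hθ i hi
      simp only [semU, Set.mem_empty_iff_false, false_iff]
      intro hbm
      exact (hmax i hi).2.1 (Deriv.hyp hbm)
    | imp a b iha ihb =>
      intro hθ i hi
      have hab := hsub.1 a b hθ
      rw [mem_semU_imp, iha hab.1 i hi, ihb hab.2 i hi,
        maxcons_imp hsub (hmax i hi) hθ]
    | tri a b iha ihb =>
      intro hθ i hi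
      have haΦ := (hsub.2 a b hθ).1
      have hbΦ := (hsub.2 a b hθ).2
      rw [mem_semU_tri]
      constructor
      · intro H
        by_contra hmem
        obtain ⟨u, v, hu, hv, hau, hbv, hrel⟩ :=
          key_lemma hsub hsim (hmax i hi) hθ hmem
        obtain ⟨j, hj, rfl⟩ := hfind u hu
        obtain ⟨l, hl, rfl⟩ := hfind v hv
        have hcj : c j ∈ semU val a := (iha haΦ j hj).2 hau
        have hzl : c l ∈ zeta (c i) (c j) :=
          (hz i (c j) (c l)).2 ⟨j, l, hi, hj, hl, hrel, rfl, rfl⟩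
        exact hbv ((ihb hbΦ l hl).1 (H (c j) hcj hzl))
      · intro H u hu v hv
        rw [hz] at hv
        obtain ⟨j, l, _, hj, hl, hrel, rfl, rfl⟩ := hv
        have haj : a ∈ wof j := (iha haΦ j hj).1 hu
        exact (ihb hbΦ l hl).2 (hrel a b H haj)
  obtain ⟨i₀, hi₀, hwi⟩ := hfind w₀ hw₀
  refine ⟨val, fun he => ?_⟩
  have hmem : c i₀ ∈ semU val φ := he ▸ Set.mem_univ _
  exact hφw₀ (hwi ▸ (truth φ hφΦ i₀ hi₀).1 hmem)

open Formula in
/-- Completeness of ℜ_d for the universal interpretation of nondeterministic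
partial recursive functions: ⊢_{ℜ_d} φ iff φ evaluates to all of ℕ under
every valuation, where (φ▷ψ)^† = {w | ∀ u ∈ φ^†, ζ_w(u) ⊆ ψ^†}. -/
theorem universal_semantics_Rd (φ : Formula) :
    Prv true φ ↔ ∀ val : ℕ → Set ℕ, semU val φ = Set.univ := by
  constructor
  · intro h val
    exact sound h val
  · intro h
    by_contra hn
    obtain ⟨val, hval⟩ := completeness_Rd φ hn
    exact hval (h val)
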